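/- arXiv:1001.3318 — 3 statements merged into one kernel-verified Lean document; each statement's English description precedes it below -/
import Mathlib

section
/- The map s ↦ (s² − 1, −75s⁵ + (345/4)s⁴ − 29s³ + (117/2)s² − 163/4) from ℝ to ℝ² is injective. -/
/-- The polynomial parametrization of the asymptotic variety of the Pinchuk map
of degree 25: `s ↦ (s² − 1, −75s⁵ + (345/4)s⁴ − 29s³ + (117/2)s² − 163/4)`. -/
noncomputable def pinchukCurve (s : ℝ) : ℝ × ℝ :=
  (s ^ 2 - 1, -75 * s ^ 5 + (345 / 4) * s ^ 4 - 29 * s ^ 3 + (117 / 2) * s ^ 2 - 163 / 4)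

theorem pinchukCurve_injective : Function.Injective pinchukCurve := by
  intro s t h
  have h1 : s ^ 2 - 1 = t ^ 2 - 1 := congrArg Prod.fst h
  have h2 : -75 * s ^ 5 + (345 / 4) * s ^ 4 - 29 * s ^ 3 + (117 / 2) * s ^ 2 - 163 / 4
      = -75 * t ^ 5 + (345 / 4) * t ^ 4 - 29 * t ^ 3 + (117 / 2) * t ^ 2 - 163 / 4 :=
    congrArg Prod.snd h
  have hsq : s ^ 2 = t ^ 2 := by linarith
  rcases sq_eq_sq_iff_eq_or_eq_neg.mp hsq with he | hn
  · exact he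
  · subst hn
    have h3 : t ^ 3 * (75 * t ^ 2 + 29) = 0 := by nlinarith [h2]
    have h4 : t = 0 := by
      rcases mul_eq_zero.mp h3 with h4 | h4
      · exact pow_eq_zero_iff (by norm_num) |>.mp h4
      · nlinarith [sq_nonneg t]
    simp [h4]
end

section
/- The derivative of the parametrization s ↦ (s² − 1, −75s⁵ + (345/4)s⁴ − 29s³ + (117/2)s² − 163/4), namely s ↦ (2s, −375s⁴ + 345s³ − 87s² + 117s), vanishes exactly at s = 0; the corresponding point of the curve is (−1, −163/4). -/
/-- The derivative of the parametrization. -/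
noncomputable def pinchukCurve' (s : ℝ) : ℝ × ℝ :=
  (2 * s, -375 * s ^ 4 + 345 * s ^ 3 - 87 * s ^ 2 + 117 * s)

theorem pinchukCurve_deriv_vanishes_only_at_zero :
    (∀ s : ℝ, HasDerivAt pinchukCurve (pinchukCurve' s) s) ∧
    (∀ s : ℝ, pinchukCurve' s = (0, 0) ↔ s = 0) ∧
    pinchukCurve 0 = (-1, -163 / 4) := by
  refine ⟨fun s => ?_, fun s => ?_, by norm_num [pinchukCurve]⟩
  · have h1 : HasDerivAt (fun s : ℝ => s ^ 2 - 1) (2 * s) s := by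
      have := (hasDerivAt_pow 2 s).sub_const 1
      simpa using this
    have h2 : HasDerivAt (fun s : ℝ =>
        -75 * s ^ 5 + (345 / 4) * s ^ 4 - 29 * s ^ 3 + (117 / 2) * s ^ 2 - 163 / 4)
        (-375 * s ^ 4 + 345 * s ^ 3 - 87 * s ^ 2 + 117 * s) s := by
      have := (((((hasDerivAt_pow 5 s).const_mul (-75 : ℝ)).add
        ((hasDerivAt_pow 4 s).const_mul (345 / 4 : ℝ))).sub
        ((hasDerivAt_pow 3 s).const_mul (29 : ℝ))).add
        ((hasDerivAt_pow 2 s).const_mul (117 / 2 : ℝ))).sub_const (163 / 4 : ℝ)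
      exact this.congr_deriv (by norm_num; ring)
    exact h1.prodMk h2
  · constructor
    · intro h
      have := congrArg Prod.fst h
      simp [pinchukCurve'] at this
      linarith
    · rintro rfl
      simp [pinchukCurve']
end

section
/- Let c, h₀ ∈ ℝ with c ≠ h₀ and c − 2h₀ − h₀² ≠ 0, and set x = (c − h₀)(h₀ + 1)/(c − 2h₀ − h₀²)² and y = (c − 2h₀ − h₀²)²(c − h₀ − h₀²)/(c − h₀)². Then P(x,y) = c and t(x,y)·(x·t(x,y) + 1) = h₀, where t(x,y) = xy − 1. That is, these formulas rationally parametrize the level set P = c by the value of h. -/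
/-- `t = xy − 1`. -/
noncomputable def tF (x y : ℝ) : ℝ := x * y - 1

/-- `h = t(xt + 1)`. -/
noncomputable def hF (x y : ℝ) : ℝ := tF x y * (x * tF x y + 1)

/-- `f = (xt + 1)²(t² + y)`. -/
noncomputable def fF (x y : ℝ) : ℝ := (x * tF x y + 1) ^ 2 * (tF x y ^ 2 + y)

/-- `P = f + h`. -/
noncomputable def PF (x y : ℝ) : ℝ := fF x y + hF x y

/-- The rational parametrization of the level set `P = c` by the value of `h`. -/
theorem pinchuk_level_set_parametrization (c h₀ : ℝ) (h1 : c ≠ h₀)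
    (h2 : c - 2 * h₀ - h₀ ^ 2 ≠ 0)
    (x y : ℝ)
    (hx : x = (c - h₀) * (h₀ + 1) / (c - 2 * h₀ - h₀ ^ 2) ^ 2)
    (hy : y = (c - 2 * h₀ - h₀ ^ 2) ^ 2 * (c - h₀ - h₀ ^ 2) / (c - h₀) ^ 2) :
    PF x y = c ∧ hF x y = h₀ := by
  have h1' : c - h₀ ≠ 0 := sub_ne_zero.mpr h1
  have h2' : c - h₀ * 2 - h₀ ^ 2 ≠ 0 := by rwa [mul_comm] at h2
  subst hx hy
  constructor <;>
  · simp only [PF, fF, hF, tF]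
    field_simp
    ring
end
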